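/- Let m = a·d, n = b·d with gcd(a,b) = 1 and a odd. Then T_n(x) − T_m(y) = ∏_{k=0}^{⌊d/2⌋} C_k(x,y), where C_k(x,y) = E_{2kπ/d}(T_b(x), T_a(y)), E_μ(x,y) = x² + y² − 2cos(μ)xy − 4sin²(μ) for μ ≢ 0 mod π, E_0(x,y) = x − y, and E_π(x,y) = x + y. -/

import Mathlib

open Polynomial Real

/-- The monic Chebyshev polynomials of the first kind. -/
noncomputable def T : ℕ → Polynomial ℝ
  | 0 => 2
  | 1 => X
  | n + 2 => X * T (n + 1) - T n

/-- The Lissajous ellipse polynomial, with degenerate cases `E 0 = x − y`, `E π = x + y`. -/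
noncomputable def E (μ x y : ℝ) : ℝ :=
  if μ = 0 then x - y
  else if μ = Real.pi then x + y
  else x ^ 2 + y ^ 2 - 2 * Real.cos μ * x * y - 4 * Real.sin μ ^ 2

lemma T_eval₂_pair (n : ℕ) (z w : ℂ) (h : z * w = 1) :
    (T n).eval₂ Complex.ofRealHom (z + w) = z ^ n + w ^ n := by
  induction n using Nat.twoStepInduction with
  | zero => simp [T]; norm_num
  | one => simp [T]
  | more n ih1 ih2 =>
    show (X * T (n+1) - T n).eval₂ Complex.ofRealHom (z + w) = _
    rw [eval₂_sub, eval₂_mul, eval₂_X, ih1, ih2]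
    linear_combination (z ^ n + w ^ n) * h

lemma exists_pair (xr : ℝ) : ∃ z : ℂ, z ≠ 0 ∧ z + z⁻¹ = xr := by
  obtain ⟨r, hr⟩ := IsAlgClosed.exists_pow_nat_eq ((xr : ℂ) ^ 2 - 4) (n := 2) two_pos
  have h1 : ((xr : ℂ) + r) / 2 * (((xr : ℂ) - r) / 2) = 1 := by linear_combination -hr/4
  have hz : ((xr : ℂ) + r) / 2 ≠ 0 := by
    intro h; rw [h, zero_mul] at h1; exact one_ne_zero h1.symm
  refine ⟨((xr : ℂ) + r) / 2, hz, ?_⟩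
  rw [inv_eq_of_mul_eq_one_right h1]
  ring

lemma ofReal_T_eval (n : ℕ) (xr : ℝ) (z : ℂ) (hz : z ≠ 0) (hx : z + z⁻¹ = xr) :
    (((T n).eval xr : ℝ) : ℂ) = z ^ n + (z⁻¹) ^ n := by
  rw [← T_eval₂_pair n z z⁻¹ (mul_inv_cancel₀ hz), hx]
  have h := Polynomial.eval₂_at_apply (p := T n) Complex.ofRealHom xr
  simpa using h.symm

lemma prod_range_split {M : Type*} [CommMonoid M] (d : ℕ) (hd : 0 < d) (G : ℕ → M) :
    ∏ j ∈ Finset.range d, G j =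
      (∏ k ∈ Finset.range (d / 2 + 1), G k) *
        ∏ k ∈ Finset.Ico 1 ((d + 1) / 2), G (d - k) := by
  rw [← Finset.prod_range_mul_prod_Ico G (show d / 2 + 1 ≤ d by omega)]
  congr 1
  apply Finset.prod_nbij' (fun j => d - j) (fun k => d - k)
  · intro a ha; simp only [Finset.mem_Ico, Finset.mem_range] at *; omega
  · intro a ha; simp only [Finset.mem_Ico, Finset.mem_range] at *; omega
  · intro a ha; simp only [Finset.mem_Ico, Finset.mem_range] at *; omega
  · intro a ha; simp only [Finset.mem_Ico, Finset.mem_range] at *; omega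
  · intro a ha
    simp only [Finset.mem_Ico] at ha
    congr 1
    omega
theorem chebyshev_diff_two_var_factorization (a b d : ℕ) (hd : 0 < d)
    (hab : Nat.Coprime a b) (ha : Odd a) (x y : ℝ) :
    (T (b * d)).eval x - (T (a * d)).eval y =
      ∏ k ∈ Finset.range (d / 2 + 1),
        E (2 * (k : ℝ) * Real.pi / d) ((T b).eval x) ((T a).eval y) := by
  have hdR : (d : ℝ) ≠ 0 := Nat.cast_ne_zero.mpr hd.ne'
  have hdC : (d : ℂ) ≠ 0 := Nat.cast_ne_zero.mpr hd.ne'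
  obtain ⟨z, hz0, hzx⟩ := exists_pair x
  obtain ⟨w, hw0, hwy⟩ := exists_pair y
  set Z : ℂ := z ^ b with hZdef
  set W : ℂ := w ^ a with hWdef
  have hZ0 : Z ≠ 0 := pow_ne_zero _ hz0
  have hW0 : W ≠ 0 := pow_ne_zero _ hw0
  set ω : ℂ := Complex.exp (2 * ↑Real.pi * Complex.I / ↑d) with hωdef
  have hω0 : ω ≠ 0 := Complex.exp_ne_zero _
  have hζ : IsPrimitiveRoot ω d := Complex.isPrimitiveRoot_exp d hd.ne'
  have hωd : ω ^ d = 1 := hζ.pow_eq_one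
  have hωpow : ∀ k : ℕ, ω ^ k = Complex.exp (2 * (k : ℂ) * ↑Real.pi * Complex.I / ↑d) := by
    intro k
    rw [← Complex.exp_nat_mul]
    congr 1
    field_simp
  set G : ℕ → ℂ := fun j => Z + Z⁻¹ - ω ^ j * W - (ω ^ j)⁻¹ * W⁻¹ with hGdef
  -- Step A : the full product of G over range d
  have hprodG : ∏ j ∈ Finset.range d, G j = Z ^ d + (Z⁻¹) ^ d - W ^ d - (W⁻¹) ^ d := by
    have e1 : ∏ j ∈ Finset.range d, (Z - ω ^ j * W) = Z ^ d - W ^ d := by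
      have h := congrArg (Polynomial.eval Z) (X_pow_sub_C_eq_prod hζ hd (rfl : W ^ d = W ^ d))
      simp only [Polynomial.eval_prod, Polynomial.eval_sub, Polynomial.eval_pow,
        Polynomial.eval_X, Polynomial.eval_C] at h
      exact h.symm
    have e2 : ∏ j ∈ Finset.range d, (Z * W - (ω⁻¹) ^ j) = (Z * W) ^ d - 1 := by
      have h := congrArg (Polynomial.eval (Z * W))
        (X_pow_sub_C_eq_prod hζ.inv hd (one_pow d))
      simp only [Polynomial.eval_prod, Polynomial.eval_sub, Polynomial.eval_pow,
        Polynomial.eval_X, Polynomial.eval_C, mul_one] at h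
      exact h.symm
    have step : ∀ j ∈ Finset.range d,
        G j = Z⁻¹ * W⁻¹ * ((Z - ω ^ j * W) * (Z * W - (ω⁻¹) ^ j)) := by
      intro j _
      have hωj : ω ^ j ≠ 0 := pow_ne_zero _ hω0
      simp only [hGdef, inv_pow]
      field_simp
      ring
    rw [Finset.prod_congr rfl step]
    simp only [Finset.prod_mul_distrib, Finset.prod_const, Finset.card_range, e1, e2]
    field_simp
    have hp : Z ^ d * Z⁻¹ ^ d = 1 := by rw [← mul_pow, mul_inv_cancel₀ hZ0, one_pow]
    have hq : W ^ d * W⁻¹ ^ d = 1 := by rw [← mul_pow, mul_inv_cancel₀ hW0, one_pow]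
    linear_combination (Z ^ d - W⁻¹ ^ d - W ^ d) * hp
      + (Z ^ d * (Z ^ d * Z⁻¹ ^ d) - W ^ d * (Z ^ d * Z⁻¹ ^ d) + Z⁻¹ ^ d) * hq
  -- coerced evaluations
  have hX : (((T b).eval x : ℝ) : ℂ) = Z + Z⁻¹ := by
    rw [ofReal_T_eval b x z hz0 hzx, inv_pow]
  have hY : (((T a).eval y : ℝ) : ℂ) = W + W⁻¹ := by
    rw [ofReal_T_eval a y w hw0 hwy, inv_pow]
  -- Step B : identify each E-factor
  have hE : ∀ k ∈ Finset.range (d / 2 + 1),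
      ((E (2 * (k : ℝ) * Real.pi / d) ((T b).eval x) ((T a).eval y) : ℝ) : ℂ)
        = G k * (if k ≠ 0 ∧ 2 * k ≠ d then G (d - k) else 1) := by
    intro k hk
    rw [Finset.mem_range] at hk
    have hkd : k ≤ d / 2 := by omega
    have hkd' : k ≤ d := by omega
    set μC : ℂ := 2 * (k : ℂ) * (Real.pi : ℂ) / (d : ℂ) with hμCdef
    have hexp : Complex.exp (μC * Complex.I) = ω ^ k := by
      rw [hωpow k]
      congr 1
      rw [hμCdef]
      ring
    have hexpneg : Complex.exp (-μC * Complex.I) = (ω ^ k)⁻¹ := by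
      rw [show (-μC * Complex.I) = -(μC * Complex.I) by ring, Complex.exp_neg, hexp]
    by_cases hk0 : k = 0
    · subst hk0
      have hμ : 2 * ((0 : ℕ) : ℝ) * Real.pi / d = 0 := by simp
      rw [hμ]
      have hEval : E 0 ((T b).eval x) ((T a).eval y) = (T b).eval x - (T a).eval y := by
        simp [E]
      rw [hEval, if_neg (show ¬((0 : ℕ) ≠ 0 ∧ 2 * 0 ≠ d) by omega), mul_one]
      push_cast
      rw [hX, hY]
      simp only [hGdef, pow_zero, inv_one, one_mul]
      ring
    · by_cases h2k : 2 * k = d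
      · have h2 : (2 : ℝ) * k = d := by exact_mod_cast h2k
        have hμ : 2 * (k : ℝ) * Real.pi / d = Real.pi := by
          rw [div_eq_iff hdR]
          linear_combination Real.pi * h2
        rw [hμ]
        have hEval : E Real.pi ((T b).eval x) ((T a).eval y) = (T b).eval x + (T a).eval y := by
          simp [E, Real.pi_ne_zero]
        rw [hEval, if_neg (show ¬(k ≠ 0 ∧ 2 * k ≠ d) by omega), mul_one]
        have hωk : ω ^ k = -1 := by
          rw [hωpow k]
          have h2C : (2 : ℂ) * k = d := by exact_mod_cast h2k
          rw [show (2 * (k : ℂ) * ↑Real.pi * Complex.I / ↑d) = ↑Real.pi * Complex.I by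
            rw [div_eq_iff hdC]; linear_combination Real.pi * Complex.I * h2C]
          exact Complex.exp_pi_mul_I
        push_cast
        rw [hX, hY]
        simp only [hGdef, hωk]
        norm_num
        ring
      · -- generic quadratic factor
        have hk1 : 1 ≤ k := Nat.one_le_iff_ne_zero.mpr hk0
        have h2kd : 2 * k < d := by omega
        have hkR : (0 : ℝ) < k := by exact_mod_cast Nat.pos_of_ne_zero hk0
        have hdRpos : (0 : ℝ) < d := by exact_mod_cast hd
        have h2kR : 2 * (k : ℝ) < d := by exact_mod_cast h2kd
        have hμ0 : 2 * (k : ℝ) * Real.pi / d ≠ 0 := by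
          apply ne_of_gt
          apply div_pos _ hdRpos
          nlinarith [Real.pi_pos]
        have hμπ : 2 * (k : ℝ) * Real.pi / d ≠ Real.pi := by
          apply ne_of_lt
          rw [div_lt_iff₀ hdRpos]
          nlinarith [Real.pi_pos]
        have hEval : E (2 * (k : ℝ) * Real.pi / d) ((T b).eval x) ((T a).eval y)
            = (T b).eval x ^ 2 + (T a).eval y ^ 2
              - 2 * Real.cos (2 * (k : ℝ) * Real.pi / d) * (T b).eval x * (T a).eval y
              - 4 * Real.sin (2 * (k : ℝ) * Real.pi / d) ^ 2 := by
          simp [E, hμ0, hμπ]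
        rw [hEval, if_pos ⟨hk0, h2k⟩]
        have hωdk : ω ^ (d - k) = (ω ^ k)⁻¹ := by
          apply eq_inv_of_mul_eq_one_left
          rw [← pow_add]
          rw [show d - k + k = d by omega, hωd]
        have hcos : Complex.cos μC = (ω ^ k + (ω ^ k)⁻¹) / 2 := by
          have h := Complex.two_cos μC
          rw [hexp, hexpneg] at h
          linear_combination h / 2
        have hsin2 : Complex.sin μC ^ 2 = -((ω ^ k)⁻¹ - ω ^ k) ^ 2 / 4 := by
          have h := Complex.two_sin μC
          rw [hexp, hexpneg] at h
          have hI := Complex.I_sq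
          linear_combination ((2 * Complex.sin μC
            + ((ω ^ k)⁻¹ - ω ^ k) * Complex.I) / 4) * h
            + (((ω ^ k)⁻¹ - ω ^ k) ^ 2 / 4) * hI
        push_cast [hμCdef.symm]
        rw [hcos, hsin2, hX, hY]
        simp only [hGdef, hωdk, inv_inv]
        have hωk0 : ω ^ k ≠ 0 := pow_ne_zero _ hω0
        have h1 : W * W⁻¹ = 1 := mul_inv_cancel₀ hW0
        have h2 : ω ^ k * (ω ^ k)⁻¹ = 1 := mul_inv_cancel₀ hωk0
        linear_combination (-(W ^ 2 + (W⁻¹) ^ 2 + 2)) * h2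
          + (-((ω ^ k) ^ 2 + ((ω ^ k)⁻¹) ^ 2 - 2)) * h1
  -- Step C : assemble
  apply Complex.ofReal_injective
  push_cast
  rw [Finset.prod_congr rfl hE, Finset.prod_mul_distrib]
  have hH : (∏ k ∈ Finset.range (d / 2 + 1),
        (if k ≠ 0 ∧ 2 * k ≠ d then G (d - k) else 1))
      = ∏ k ∈ Finset.Ico 1 ((d + 1) / 2), G (d - k) := by
    rw [← Finset.prod_subset
      (show Finset.Ico 1 ((d + 1) / 2) ⊆ Finset.range (d / 2 + 1) by
        intro t ht
        simp only [Finset.mem_Ico, Finset.mem_range] at *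
        omega)
      (fun t ht hnt => by
        simp only [Finset.mem_range] at ht
        simp only [Finset.mem_Ico, not_and, not_lt] at hnt
        exact if_neg (by omega))]
    apply Finset.prod_congr rfl
    intro t ht
    simp only [Finset.mem_Ico] at ht
    exact if_pos (by omega)
  rw [hH, ← prod_range_split d hd G, hprodG]
  rw [ofReal_T_eval (b * d) x z hz0 hzx, ofReal_T_eval (a * d) y w hw0 hwy]
  rw [pow_mul, pow_mul, pow_mul, pow_mul, ← hZdef, ← hWdef, inv_pow, inv_pow]
  ring
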